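/- For every symmetric matrix Q ∈ S^n and every ρ ∈ {1,…,n}, the Shor relaxation of the sparse StQP is exact, i.e., ℓ^{R2}_ρ(Q) = ℓ_ρ(Q), if and only if Q is positive semidefinite and min{xᵀQx : x ∈ F} has an optimal solution x* with ‖x*‖₀ ≤ ρ. -/

import Mathlib

open Matrix BigOperators

noncomputable section

def simplexF (n : ℕ) : Set (Fin n → ℝ) :=
  {x | (∑ i, x i) = 1 ∧ ∀ i, 0 ≤ x i}

def sparsity {n : ℕ} (x : Fin n → ℝ) : ℕ :=
  Set.ncard {i | x i ≠ 0}

def sparseF (n ρ : ℕ) : Set (Fin n → ℝ) :=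
  {x | x ∈ simplexF n ∧ sparsity x ≤ ρ}

def quadForm {n : ℕ} (Q : Matrix (Fin n) (Fin n) ℝ) (x : Fin n → ℝ) : ℝ :=
  x ⬝ᵥ Q.mulVec x

def ell {n : ℕ} (Q : Matrix (Fin n) (Fin n) ℝ) : ℝ :=
  sInf (quadForm Q '' simplexF n)

def ellSparse {n : ℕ} (Q : Matrix (Fin n) (Fin n) ℝ) (ρ : ℕ) : ℝ :=
  sInf (quadForm Q '' sparseF n ρ)

def ip {n : ℕ} (Q X : Matrix (Fin n) (Fin n) ℝ) : ℝ :=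
  ∑ i, ∑ j, Q i j * X i j

def bigMat {n : ℕ} (x u : Fin n → ℝ) (X U R : Matrix (Fin n) (Fin n) ℝ) :
    Matrix (Unit ⊕ (Fin n ⊕ Fin n)) (Unit ⊕ (Fin n ⊕ Fin n)) ℝ :=
  Matrix.fromBlocks (Matrix.of fun _ _ => (1 : ℝ))
    (Matrix.of fun (_ : Unit) j => Sum.elim x u j)
    (Matrix.of fun i (_ : Unit) => Sum.elim x u i)
    (Matrix.fromBlocks X R Rᵀ U)

def R2Feasible {n : ℕ} (ρ : ℕ) (x u : Fin n → ℝ)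
    (X U R : Matrix (Fin n) (Fin n) ℝ) : Prop :=
  X.IsSymm ∧ U.IsSymm ∧
  (∑ i, x i) = 1 ∧ (∑ i, u i) = (ρ : ℝ) ∧
  (∀ i, U i i = u i) ∧
  (∀ i, 0 ≤ x i) ∧ (∀ i, x i ≤ u i) ∧
  (bigMat x u X U R).PosSemidef

def FR2proj (n ρ : ℕ) : Set ((Fin n → ℝ) × Matrix (Fin n) (Fin n) ℝ) :=
  {p | ∃ u U R, R2Feasible ρ p.1 u p.2 U R}

def ellR2 {n : ℕ} (Q : Matrix (Fin n) (Fin n) ℝ) (ρ : ℕ) : EReal :=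
  sInf ((fun p => ((ip Q p.2 : ℝ) : EReal)) '' FR2proj n ρ)

/-! ### Auxiliary lemmas -/

lemma quadNN {m : Type*} [Fintype m] {M : Matrix m m ℝ} (h : M.PosSemidef) (y : m → ℝ) :
    0 ≤ y ⬝ᵥ M *ᵥ y := by simpa using h.dotProduct_mulVec_nonneg y

lemma vmv_mulVec {m : Type*} [Fintype m] (v w : m → ℝ) (y : m → ℝ) :
    (vecMulVec v w) *ᵥ y = (w ⬝ᵥ y) • v := by
  ext i
  simp [vecMulVec, mulVec, dotProduct, Finset.mul_sum, mul_comm, mul_assoc, mul_left_comm]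

lemma psd_vmv {m : Type*} [Fintype m] (v : m → ℝ) : (vecMulVec v v).PosSemidef := by
  refine PosSemidef.of_dotProduct_mulVec_nonneg ?_ fun y => ?_
  · ext i j; simp [vecMulVec, conjTranspose_apply, mul_comm]
  · rw [vmv_mulVec]
    simp only [dotProduct_smul, star_trivial, smul_eq_mul]
    rw [dotProduct_comm]
    exact mul_self_nonneg _

lemma isSymm_of_psd {m : Type*} [Fintype m] {M : Matrix m m ℝ} (h : M.PosSemidef) : M.IsSymm := by
  unfold Matrix.IsSymm
  rw [← Matrix.conjTranspose_eq_transpose_of_trivial]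
  exact h.isHermitian

lemma ip_vmv {n : ℕ} (Q : Matrix (Fin n) (Fin n) ℝ) (x y : Fin n → ℝ) :
    ip Q (vecMulVec x y) = x ⬝ᵥ Q *ᵥ y := by
  simp [ip, vecMulVec, dotProduct, mulVec, Finset.mul_sum]
  exact Finset.sum_congr rfl fun i _ => Finset.sum_congr rfl fun j _ => by ring

lemma ip_quadForm {n : ℕ} (Q : Matrix (Fin n) (Fin n) ℝ) (x : Fin n → ℝ) :
    ip Q (vecMulVec x x) = quadForm Q x := ip_vmv Q x x

lemma ip_add {n : ℕ} (Q X Y : Matrix (Fin n) (Fin n) ℝ) :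
    ip Q (X + Y) = ip Q X + ip Q Y := by
  simp [ip, mul_add, Finset.sum_add_distrib]

lemma ip_smul {n : ℕ} (Q X : Matrix (Fin n) (Fin n) ℝ) (t : ℝ) :
    ip Q (t • X) = t * ip Q X := by
  simp [ip, Finset.mul_sum]
  exact Finset.sum_congr rfl fun i _ => Finset.sum_congr rfl fun j _ => by ring

lemma ip_eq_trace {n : ℕ} (Q X : Matrix (Fin n) (Fin n) ℝ) (hX : X.IsHermitian) :
    ip Q X = Matrix.trace (Q * X) := by
  simp only [Matrix.trace, Matrix.diag, Matrix.mul_apply]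
  rw [ip]
  refine Finset.sum_congr rfl fun i _ => Finset.sum_congr rfl fun j _ => ?_
  rw [← hX.apply i j]
  simp

lemma ip_nonneg {n : ℕ} {Q X : Matrix (Fin n) (Fin n) ℝ}
    (hQ : Q.PosSemidef) (hX : X.PosSemidef) : 0 ≤ ip Q X := by
  rw [ip_eq_trace Q X hX.isHermitian]
  open scoped MatrixOrder in obtain ⟨B, rfl⟩ := CStarAlgebra.nonneg_iff_eq_star_mul_self.mp hQ.nonneg
  rw [← Matrix.trace_mul_cycle]
  have h2 : (B * X * Bᴴ).PosSemidef := hX.mul_mul_conjTranspose_same B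
  rw [Matrix.trace]
  refine Finset.sum_nonneg fun i _ => ?_
  have := quadNN h2 (Pi.single i 1)
  simpa [mulVec, dotProduct, Pi.single_apply, Matrix.star_eq_conjTranspose] using this

lemma psd_br {m l : Type*} [Fintype m] [Fintype l] {M : Matrix l l ℝ} (hM : M.PosSemidef) :
    (fromBlocks (0 : Matrix m m ℝ) 0 0 M).PosSemidef := by
  refine PosSemidef.of_dotProduct_mulVec_nonneg ?_ fun y => ?_
  · unfold Matrix.IsHermitian
    rw [Matrix.fromBlocks_conjTranspose]
    simp [← Matrix.conjTranspose_eq_transpose_of_trivial, hM.isHermitian.eq]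
  · have hy : y = Sum.elim (y ∘ Sum.inl) (y ∘ Sum.inr) := by
      ext i; cases i <;> rfl
    rw [hy, Matrix.fromBlocks_mulVec]
    simp only [Sum.elim_comp_inl, Sum.elim_comp_inr, Matrix.zero_mulVec, add_zero, zero_add,
      sumElim_dotProduct_sumElim, star_trivial]
    simpa using quadNN hM (y ∘ Sum.inr)

lemma psd_tl {m l : Type*} [Fintype m] [Fintype l] {M : Matrix l l ℝ} (hM : M.PosSemidef) :
    (fromBlocks M 0 0 (0 : Matrix m m ℝ)).PosSemidef := by
  refine PosSemidef.of_dotProduct_mulVec_nonneg ?_ fun y => ?_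
  · unfold Matrix.IsHermitian
    rw [Matrix.fromBlocks_conjTranspose]
    simp [← Matrix.conjTranspose_eq_transpose_of_trivial, hM.isHermitian.eq]
  · have hy : y = Sum.elim (y ∘ Sum.inl) (y ∘ Sum.inr) := by
      ext i; cases i <;> rfl
    rw [hy, Matrix.fromBlocks_mulVec]
    simp only [Sum.elim_comp_inl, Sum.elim_comp_inr, Matrix.zero_mulVec, add_zero, zero_add,
      sumElim_dotProduct_sumElim, star_trivial]
    simpa using quadNN hM (y ∘ Sum.inl)

lemma bigMat_decomp {n : ℕ} (x u d : Fin n → ℝ) :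
    bigMat x u (vecMulVec x x) (vecMulVec u u + Matrix.diagonal d) (vecMulVec x u)
      = vecMulVec (Sum.elim (fun _ => 1) (Sum.elim x u)) (Sum.elim (fun _ => 1) (Sum.elim x u))
        + fromBlocks 0 0 0 (fromBlocks 0 0 0 (Matrix.diagonal d)) := by
  ext i j
  rcases i with _ | (i | i) <;> rcases j with _ | (j | j) <;>
    simp [bigMat, vecMulVec, Matrix.fromBlocks, Matrix.transpose_apply, mul_comm]

lemma bigMat_add {n : ℕ} (x u : Fin n → ℝ) (X X' U R : Matrix (Fin n) (Fin n) ℝ) :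
    bigMat x u (X + X') U R
      = bigMat x u X U R + fromBlocks 0 0 0 (fromBlocks X' 0 0 0) := by
  ext i j
  rcases i with _ | (i | i) <;> rcases j with _ | (j | j) <;>
    simp [bigMat, Matrix.fromBlocks]

lemma schur {n : ℕ} {x u : Fin n → ℝ} {X U R : Matrix (Fin n) (Fin n) ℝ}
    (h : (bigMat x u X U R).PosSemidef) (z : Fin n → ℝ) :
    (x ⬝ᵥ z) ^ 2 ≤ z ⬝ᵥ X *ᵥ z := by
  have H := quadNN h (Sum.elim (fun _ => -(x ⬝ᵥ z)) (Sum.elim z 0))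
  simp only [bigMat, Matrix.fromBlocks_mulVec, Sum.elim_comp_inl, Sum.elim_comp_inr,
    sumElim_dotProduct_sumElim, Matrix.zero_mulVec, Matrix.mulVec_zero, add_zero,
    zero_add, zero_dotProduct, dotProduct_zero] at H
  simp only [dotProduct, Matrix.mulVec, Fintype.sum_sum_type] at H ⊢
  simp only [Matrix.mulVec, dotProduct, Matrix.of_apply, Sum.elim_inl, Sum.elim_inr,
    Pi.add_apply, Pi.zero_apply, Finset.univ_unique, Finset.sum_const, Finset.card_singleton,
    one_smul, mul_neg, neg_mul, one_mul, mul_zero, zero_mul, Finset.sum_neg_distrib,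
    mul_add, add_zero, zero_add, Finset.sum_add_distrib, smul_eq_mul] at H
  rw [Fintype.sum_sum_type] at H
  simp only [Sum.elim_inl, Sum.elim_inr, Pi.zero_apply, mul_zero, Finset.sum_const_zero,
    add_zero, smul_zero, smul_neg, neg_zero, smul_eq_mul] at H
  have e1 : (∑ i : Fin n, z i * (x i * (∑ j : Fin n, x j * z j)))
      = (∑ j : Fin n, x j * z j) * ∑ j : Fin n, x j * z j := by
    rw [Finset.sum_mul]
    exact Finset.sum_congr rfl fun i _ => by ring
  rw [e1] at H
  nlinarith [H]

lemma mem_FR2 {n ρ : ℕ} (hn : 0 < n) (h1 : 1 ≤ ρ) (h2 : ρ ≤ n) {x : Fin n → ℝ}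
    (hx : x ∈ simplexF n) : (x, vecMulVec x x) ∈ FR2proj n ρ := by
  obtain ⟨hsum, hpos⟩ := hx
  set c : ℝ := ((ρ : ℝ) - 1) / ((n : ℝ) - 1) with hc
  have hρ1 : (1 : ℝ) ≤ (ρ : ℝ) := by exact_mod_cast h1
  have hρn : (ρ : ℝ) ≤ (n : ℝ) := by exact_mod_cast h2
  have hxle1 : ∀ i, x i ≤ 1 := by
    intro i
    rw [← hsum]
    exact Finset.single_le_sum (fun j _ => hpos j) (Finset.mem_univ i)
  have hc0 : 0 ≤ c := by
    apply div_nonneg <;> [linarith; skip]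
    rcases Nat.eq_or_lt_of_le hn with h | h
    · simp [← h]
    · have : (2 : ℝ) ≤ (n : ℝ) := by exact_mod_cast h
      linarith
  have hc1 : c ≤ 1 := by
    rcases Nat.eq_or_lt_of_le hn with h | h
    · rw [hc]
      simp [← h]
    · have h2n : (2 : ℝ) ≤ (n : ℝ) := by exact_mod_cast h
      rw [hc, div_le_one (by linarith)]
      linarith
  set u : Fin n → ℝ := fun i => x i + c * (1 - x i) with hu
  have hxu : ∀ i, x i ≤ u i := fun i =>
    le_add_of_nonneg_right (mul_nonneg hc0 (by linarith [hxle1 i]))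
  have hu1 : ∀ i, u i ≤ 1 := fun i => by
    have := hxle1 i; have := hpos i
    show x i + c * (1 - x i) ≤ 1
    nlinarith
  have hu0 : ∀ i, 0 ≤ u i := fun i => le_trans (hpos i) (hxu i)
  have hsumu : (∑ i, u i) = (ρ : ℝ) := by
    have e1 : (∑ i, u i) = 1 + c * ((n : ℝ) - 1) := by
      simp only [hu, Finset.sum_add_distrib, hsum, ← Finset.mul_sum, Finset.sum_sub_distrib,
        Finset.sum_const, Finset.card_univ, Fintype.card_fin, nsmul_eq_mul, mul_one]
    rw [e1]
    rcases Nat.eq_or_lt_of_le hn with h | h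
    · have hρ : ρ = 1 := by omega
      rw [hc]
      simp [← h, hρ]
    · have h2n : (2 : ℝ) ≤ (n : ℝ) := by exact_mod_cast h
      rw [hc, div_mul_cancel₀ _ (by linarith : (n : ℝ) - 1 ≠ 0)]
      ring
  set d : Fin n → ℝ := fun i => u i - u i * u i with hd
  have hd0 : (0 : Fin n → ℝ) ≤ d := by
    intro i
    have := hu0 i; have := hu1 i
    simp only [hd, Pi.zero_apply]
    nlinarith
  refine ⟨u, vecMulVec u u + Matrix.diagonal d, vecMulVec x u,
    isSymm_of_psd (psd_vmv x), isSymm_of_psd ((psd_vmv u).add (.diagonal hd0)),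
    hsum, hsumu, fun i => ?_, hpos, hxu, ?_⟩
  · simp [vecMulVec, Matrix.diagonal, hd]
  · rw [bigMat_decomp]
    exact (psd_vmv _).add (psd_br (psd_br (.diagonal hd0)))

lemma quad_le_ip {n ρ : ℕ} {Q : Matrix (Fin n) (Fin n) ℝ} (hQ : Q.PosSemidef)
    {x u : Fin n → ℝ} {X U R : Matrix (Fin n) (Fin n) ℝ}
    (h : R2Feasible ρ x u X U R) : quadForm Q x ≤ ip Q X := by
  obtain ⟨hXs, -, -, -, -, -, -, hpsd⟩ := h
  have hY : (X - vecMulVec x x).PosSemidef := by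
    refine PosSemidef.of_dotProduct_mulVec_nonneg ?_ fun z => ?_
    · have h1 : X.IsHermitian := by
        rw [Matrix.IsHermitian, Matrix.conjTranspose_eq_transpose_of_trivial]
        exact hXs
      exact h1.sub (psd_vmv x).isHermitian
    · simp only [star_trivial, Matrix.sub_mulVec, dotProduct_sub]
      rw [vmv_mulVec]
      have hcomm : z ⬝ᵥ x = x ⬝ᵥ z := dotProduct_comm z x
      simp only [dotProduct_smul, smul_eq_mul, hcomm]
      nlinarith [schur hpsd z]
  have hdec : ip Q X = ip Q (X - vecMulVec x x) + quadForm Q x := by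
    rw [← ip_quadForm, ← ip_add, sub_add_cancel]
  linarith [ip_nonneg hQ hY]

lemma simplexF_eq (n : ℕ) : simplexF n = stdSimplex ℝ (Fin n) := by
  ext x; exact and_comm

lemma isCompact_simplexF (n : ℕ) : IsCompact (simplexF n) := by
  rw [simplexF_eq]; exact isCompact_stdSimplex _ _

lemma isClosed_simplexF (n : ℕ) : IsClosed (simplexF n) := by
  rw [simplexF_eq]; exact isClosed_stdSimplex _ _

lemma quadForm_continuous {n : ℕ} (Q : Matrix (Fin n) (Fin n) ℝ) :
    Continuous (quadForm Q) := by
  show Continuous fun x : Fin n → ℝ => x ⬝ᵥ Q *ᵥ x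
  simp only [dotProduct, Matrix.mulVec]
  fun_prop

lemma isClosed_sparsity_le {n ρ : ℕ} : IsClosed {x : Fin n → ℝ | sparsity x ≤ ρ} := by
  have : {x : Fin n → ℝ | sparsity x ≤ ρ} =
      ⋃ (S : {S : Finset (Fin n) // S.card ≤ ρ}), {x : Fin n → ℝ | ∀ i, i ∉ S.1 → x i = 0} := by
    ext x
    simp only [Set.mem_setOf_eq, Set.mem_iUnion]
    constructor
    · intro hx
      have hfin : {i | x i ≠ 0}.Finite := Set.toFinite _
      refine ⟨⟨hfin.toFinset, ?_⟩, fun i hi => ?_⟩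
      · rw [← Set.ncard_eq_toFinset_card _ hfin]; exact hx
      · by_contra h
        exact hi (hfin.mem_toFinset.mpr h)
    · rintro ⟨⟨S, hS⟩, hx⟩
      calc sparsity x ≤ S.card := by
            rw [sparsity, ← Set.ncard_coe_finset]
            apply Set.ncard_le_ncard _ S.finite_toSet
            intro i hi
            by_contra h
            exact hi (hx i h)
        _ ≤ ρ := hS
  rw [this]
  apply isClosed_iUnion_of_finite
  intro S
  have : {x : Fin n → ℝ | ∀ i, i ∉ S.1 → x i = 0} =
      ⋂ (i : Fin n) (_ : i ∉ S.1), (fun x : Fin n → ℝ => x i) ⁻¹' {0} := by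
    ext x; simp
  rw [this]
  exact isClosed_iInter fun i => isClosed_iInter fun _ =>
    isClosed_singleton.preimage (continuous_apply i)

lemma isCompact_sparseF (n ρ : ℕ) : IsCompact (sparseF n ρ) := by
  have h1 : sparseF n ρ = simplexF n ∩ {x | sparsity x ≤ ρ} := rfl
  rw [h1]
  exact (isCompact_simplexF n).of_isClosed_subset
    ((isClosed_simplexF n).inter isClosed_sparsity_le) Set.inter_subset_left

lemma single_mem_sparseF {n ρ : ℕ} (hn : 0 < n) (h1 : 1 ≤ ρ) :
    (fun i : Fin n => if i = ⟨0, hn⟩ then (1 : ℝ) else 0) ∈ sparseF n ρ := by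
  refine ⟨⟨?_, fun i => ?_⟩, ?_⟩
  · simp
  · dsimp only; split <;> norm_num
  · have : {i : Fin n | (if i = ⟨0, hn⟩ then (1 : ℝ) else 0) ≠ 0} = {(⟨0, hn⟩ : Fin n)} := by
      ext i
      by_cases h : i = ⟨0, hn⟩ <;> simp [h]
    rw [sparsity, this]
    simpa using h1

lemma ellR2_le_quad {n ρ : ℕ} (hn : 0 < n) (h1 : 1 ≤ ρ) (h2 : ρ ≤ n)
    (Q : Matrix (Fin n) (Fin n) ℝ) {x : Fin n → ℝ} (hx : x ∈ simplexF n) :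
    ellR2 Q ρ ≤ ((quadForm Q x : ℝ) : EReal) := by
  apply sInf_le
  exact ⟨(x, vecMulVec x x), mem_FR2 hn h1 h2 hx, by simp [ip_quadForm]⟩

lemma le_ellR2 {n ρ : ℕ} {Q : Matrix (Fin n) (Fin n) ℝ} (hQ : Q.PosSemidef)
    {c : ℝ} (hc : ∀ y ∈ simplexF n, c ≤ quadForm Q y) :
    ((c : ℝ) : EReal) ≤ ellR2 Q ρ := by
  apply le_sInf
  rintro b ⟨⟨x, X⟩, ⟨u, U, R, hfeas⟩, rfl⟩
  have hx : x ∈ simplexF n := ⟨hfeas.2.2.1, hfeas.2.2.2.2.2.1⟩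
  have hle : c ≤ ip Q X := le_trans (hc x hx) (quad_le_ip hQ hfeas)
  show ((c : ℝ) : EReal) ≤ ((ip Q X : ℝ) : EReal)
  exact_mod_cast hle

lemma ellR2_bot {n ρ : ℕ} (hn : 0 < n) (h1 : 1 ≤ ρ) (h2 : ρ ≤ n)
    {Q : Matrix (Fin n) (Fin n) ℝ} (hQ : Q.IsSymm) (hnpsd : ¬ Q.PosSemidef) :
    ellR2 Q ρ = ⊥ := by
  have hherm : Q.IsHermitian := by
    rw [Matrix.IsHermitian, Matrix.conjTranspose_eq_transpose_of_trivial]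
    exact hQ
  have hv : ∃ v, v ⬝ᵥ Q *ᵥ v < 0 := by
    by_contra h
    push_neg at h
    exact hnpsd (.of_dotProduct_mulVec_nonneg hherm fun v => by simpa using h v)
  obtain ⟨v, hv⟩ := hv
  have hx0 : (fun i : Fin n => if i = ⟨0, hn⟩ then (1 : ℝ) else 0) ∈ simplexF n :=
    (single_mem_sparseF hn h1).1
  set x0 : Fin n → ℝ := fun i => if i = ⟨0, hn⟩ then (1 : ℝ) else 0 with hx0def
  obtain ⟨u, U, R, hfeas⟩ := mem_FR2 hn h1 h2 hx0
  have hmem : ∀ t : ℝ, 0 ≤ t →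
      (x0, vecMulVec x0 x0 + t • vecMulVec v v) ∈ FR2proj n ρ := by
    intro t ht
    have hsm : t • vecMulVec v v
        = vecMulVec (Real.sqrt t • v) (Real.sqrt t • v) := by
      ext i j
      simp only [vecMulVec, Matrix.smul_apply, Matrix.of_apply, Pi.smul_apply, smul_eq_mul]
      calc t * (v i * v j) = (Real.sqrt t * Real.sqrt t) * (v i * v j) := by
            rw [Real.mul_self_sqrt ht]
        _ = Real.sqrt t * v i * (Real.sqrt t * v j) := by ring
    have hX'psd : (t • vecMulVec v v).PosSemidef := by rw [hsm]; exact psd_vmv _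
    obtain ⟨hXs, hUs, hxs, hus, hdU, hx0p, hxu, hpsd⟩ := hfeas
    refine ⟨u, U, R, isSymm_of_psd ((psd_vmv x0).add hX'psd), hUs, hxs, hus, hdU, hx0p, hxu, ?_⟩
    rw [bigMat_add]
    exact hpsd.add (psd_br (psd_tl hX'psd))
  have hval : ∀ t : ℝ, ip Q (vecMulVec x0 x0 + t • vecMulVec v v)
      = quadForm Q x0 + t * (v ⬝ᵥ Q *ᵥ v) := by
    intro t
    rw [ip_add, ip_smul, ip_quadForm, ip_vmv]
  rw [ellR2, sInf_eq_bot]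
  intro b hb
  rcases eq_or_ne b ⊤ with rfl | hbt
  · refine ⟨((ip Q (vecMulVec x0 x0 + (0:ℝ) • vecMulVec v v) : ℝ) : EReal),
      ⟨(x0, _), hmem 0 le_rfl, rfl⟩, EReal.coe_lt_top _⟩
  · have hbb : b ≠ ⊥ := ne_of_gt hb
    set r : ℝ := b.toReal with hr
    have hbr : (r : EReal) = b := EReal.coe_toReal hbt hbb
    set qf : ℝ := quadForm Q x0 with hqf
    rcases lt_or_ge qf r with hlt | hge
    · refine ⟨((ip Q (vecMulVec x0 x0 + (0:ℝ) • vecMulVec v v) : ℝ) : EReal),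
        ⟨(x0, _), hmem 0 le_rfl, rfl⟩, ?_⟩
      rw [hval, ← hbr]
      apply EReal.coe_lt_coe_iff.mpr
      simpa using hlt
    · set t : ℝ := (qf - r + 1) / (-(v ⬝ᵥ Q *ᵥ v)) with htdef
      have hq : -(v ⬝ᵥ Q *ᵥ v) > 0 := by linarith
      have ht : 0 ≤ t := div_nonneg (by linarith) (le_of_lt hq)
      have htq : t * (v ⬝ᵥ Q *ᵥ v) = -(qf - r + 1) := by
        calc t * (v ⬝ᵥ Q *ᵥ v)
            = -((qf - r + 1) / (-(v ⬝ᵥ Q *ᵥ v)) * (-(v ⬝ᵥ Q *ᵥ v))) := by rw [htdef]; ring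
          _ = -(qf - r + 1) := by rw [div_mul_cancel₀ _ (ne_of_gt hq)]
      refine ⟨((ip Q (vecMulVec x0 x0 + t • vecMulVec v v) : ℝ) : EReal),
        ⟨(x0, _), hmem t ht, rfl⟩, ?_⟩
      rw [hval, ← hbr]
      apply EReal.coe_lt_coe_iff.mpr
      linarith [htq]

theorem stmt9 {n : ℕ} (hn : 0 < n) (Q : Matrix (Fin n) (Fin n) ℝ) (hQ : Q.IsSymm)
    (ρ : ℕ) (h1 : 1 ≤ ρ) (h2 : ρ ≤ n) :
    ellR2 Q ρ = (ellSparse Q ρ : EReal) ↔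
      Q.PosSemidef ∧
        ∃ x ∈ simplexF n, (∀ y ∈ simplexF n, quadForm Q x ≤ quadForm Q y) ∧
          sparsity x ≤ ρ := by
  have hsne : (sparseF n ρ).Nonempty := ⟨_, single_mem_sparseF hn h1⟩
  have hSne : (simplexF n).Nonempty := ⟨_, (single_mem_sparseF hn h1).1⟩
  obtain ⟨xh, hxh, hxhmin⟩ := (isCompact_sparseF n ρ).exists_isMinOn hsne
    (quadForm_continuous Q).continuousOn
  have hellSp : ellSparse Q ρ = quadForm Q xh := by
    apply IsLeast.csInf_eq
    constructor
    · exact ⟨xh, hxh, rfl⟩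
    · rintro b ⟨y, hy, rfl⟩
      exact hxhmin hy
  constructor
  · intro h
    have hpsd : Q.PosSemidef := by
      by_contra hnpsd
      rw [ellR2_bot hn h1 h2 hQ hnpsd] at h
      exact EReal.coe_ne_bot _ h.symm
    obtain ⟨xs, hxs, hxsmin⟩ := (isCompact_simplexF n).exists_isMinOn hSne
      (quadForm_continuous Q).continuousOn
    have hle1 : ellR2 Q ρ ≤ ((quadForm Q xs : ℝ) : EReal) :=
      ellR2_le_quad hn h1 h2 Q hxs
    rw [h] at hle1
    have hle2 : ellSparse Q ρ ≤ quadForm Q xs := EReal.coe_le_coe_iff.mp hle1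
    rw [hellSp] at hle2
    refine ⟨hpsd, xh, hxh.1, fun y hy => le_trans hle2 (hxsmin hy), hxh.2⟩
  · rintro ⟨hpsd, x0, hx0mem, hx0min, hx0sp⟩
    have hell0 : ellSparse Q ρ = quadForm Q x0 := by
      apply IsLeast.csInf_eq
      constructor
      · exact ⟨x0, ⟨hx0mem, hx0sp⟩, rfl⟩
      · rintro b ⟨y, hy, rfl⟩
        exact hx0min y hy.1
    apply le_antisymm
    · rw [hell0]
      exact ellR2_le_quad hn h1 h2 Q hx0mem
    · rw [hell0]
      exact le_ellR2 hpsd hx0min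

end
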